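/- arXiv:1105.0133 — 2 statements merged into one kernel-verified Lean document; each statement's English description precedes it below -/
import Mathlib

section
/- Let N ≥ 1 and let P_{XY|AB} be a family of probability distributions on pairs (x,y) ∈ {+1,−1}² indexed by settings a ∈ {0,2,…,2N−2} and b ∈ {1,3,…,2N−1}, satisfying the two-party non-signalling conditions: the marginal distribution of X given (a,b) does not depend on b, and the marginal distribution of Y given (a,b) does not depend on a. Then for every setting a, the variational distance between the marginal distribution P_{X|a} and the uniform distribution on {+1,−1} is at most I_N/2, where I_N is the chained-Bell quantity of P_{XY|AB}. -/
noncomputable section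

open Finset

/-- The two outcomes `+1` and `-1`. -/
def pm : Finset ℤ := {1, -1}

/-- Settings on side A: `{0, 2, 4, …, 2N-2}`. -/
def SA (N : ℕ) : Finset ℕ := (Finset.range N).image (fun k => 2 * k)

/-- Settings on side B: `{1, 3, 5, …, 2N-1}`. -/
def SB (N : ℕ) : Finset ℕ := (Finset.range N).image (fun k => 2 * k + 1)

/-- Probability that `X = Y` given settings `(a, b)`. -/
def Pagree (P : ℕ → ℕ → ℤ → ℤ → ℝ) (a b : ℕ) : ℝ :=
  P a b 1 1 + P a b (-1) (-1)

/-- Probability that `X ≠ Y` given settings `(a, b)`. -/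
def Pdiff (P : ℕ → ℕ → ℤ → ℤ → ℝ) (a b : ℕ) : ℝ :=
  P a b 1 (-1) + P a b (-1) 1

/-- Chained-Bell quantity `I_N` of the family `P_{XY|AB}`:
`I_N = P(X=Y | A=0, B=2N-1) + ∑_{a,b : |a-b|=1} P(X≠Y | A=a, B=b)`. -/
def IN (P : ℕ → ℕ → ℤ → ℤ → ℝ) (N : ℕ) : ℝ :=
  Pagree P 0 (2 * N - 1) +
    ∑ p ∈ (SA N ×ˢ SB N).filter (fun p => p.1 + 1 = p.2 ∨ p.2 + 1 = p.1),
      Pdiff P p.1 p.2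

/-- Marginal distribution of `X` given settings `(a, b)`. -/
def PX (P : ℕ → ℕ → ℤ → ℤ → ℝ) (a b : ℕ) (x : ℤ) : ℝ :=
  ∑ y ∈ pm, P a b x y

/-- Marginal distribution of `Y` given settings `(a, b)`. -/
def PY (P : ℕ → ℕ → ℤ → ℤ → ℝ) (a b : ℕ) (y : ℤ) : ℝ :=
  ∑ x ∈ pm, P a b x y

lemma sum_pm (f : ℤ → ℝ) : ∑ x ∈ pm, f x = f 1 + f (-1) :=
  Finset.sum_pair (by decide)

lemma mem_SA {N a : ℕ} : a ∈ SA N ↔ ∃ k, k < N ∧ 2 * k = a := by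
  simp [SA]

lemma mem_SB {N b : ℕ} : b ∈ SB N ↔ ∃ k, k < N ∧ 2 * k + 1 = b := by
  simp [SB]

lemma telescope (c : ℕ → ℝ) (m n : ℕ) (h : m ≤ n) :
    |c n - c m| ≤ ∑ i ∈ Finset.Ico m n, |c (i + 1) - c i| := by
  have e : c n - c m = ∑ i ∈ Finset.Ico m n, (c (i + 1) - c i) := by
    rw [Finset.sum_Ico_eq_sub _ h, Finset.sum_range_sub, Finset.sum_range_sub]
    ring
  rw [e]
  exact Finset.abs_sum_le_sum_abs _ _

/-- For any two-party non-signalling family `P_{XY|AB}` of distributions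
on `{+1,-1}²`, the variational distance of the marginal `P_{X|a}` from the uniform
distribution on `{+1,-1}` is at most `I_N / 2`. -/
theorem statement2 (N : ℕ) (hN : 1 ≤ N)
    (P : ℕ → ℕ → ℤ → ℤ → ℝ)
    (hpos : ∀ a ∈ SA N, ∀ b ∈ SB N, ∀ x ∈ pm, ∀ y ∈ pm, 0 ≤ P a b x y)
    (hsum : ∀ a ∈ SA N, ∀ b ∈ SB N, ∑ x ∈ pm, ∑ y ∈ pm, P a b x y = 1)
    (hNSX : ∀ a ∈ SA N, ∀ b ∈ SB N, ∀ b' ∈ SB N, ∀ x ∈ pm,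
      PX P a b x = PX P a b' x)
    (hNSY : ∀ a ∈ SA N, ∀ a' ∈ SA N, ∀ b ∈ SB N, ∀ y ∈ pm,
      PY P a b y = PY P a' b y) :
    ∀ a ∈ SA N, ∀ b ∈ SB N,
      (1 / 2) * (|PX P a b 1 - 1 / 2| + |PX P a b (-1) - 1 / 2|) ≤ IN P N / 2 := by
  intro a ha b hb
  obtain ⟨k, hk, hka⟩ := mem_SA.mp ha
  have hpmone : (1 : ℤ) ∈ pm := by decide
  have h1SB : (1 : ℕ) ∈ SB N := mem_SB.mpr ⟨0, hN, rfl⟩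
  have h0SA : (0 : ℕ) ∈ SA N := mem_SA.mpr ⟨0, hN, rfl⟩
  have hLSB : 2 * N - 1 ∈ SB N := mem_SB.mpr ⟨N - 1, by omega, by omega⟩
  set L := 2 * N - 1 with hL
  set c : ℕ → ℝ := fun i => if Even i then PX P i 1 1 else PY P 0 i 1 with hc
  set g : ℕ → ℕ × ℕ := fun i => if Even i then (i, i + 1) else (i + 1, i) with hg
  -- generic marginal-distance bound
  have hdiff : ∀ a' ∈ SA N, ∀ b' ∈ SB N,
      |PX P a' b' 1 - PY P a' b' 1| ≤ Pdiff P a' b' := by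
    intro a' ha' b' hb'
    have h1 := hpos a' ha' b' hb' 1 (by decide) (-1) (by decide)
    have h2 := hpos a' ha' b' hb' (-1) (by decide) 1 (by decide)
    simp only [PX, PY, Pdiff, sum_pm]
    rw [abs_le]
    constructor <;> linarith
  -- the chain edges lie in the index set of the Bell sum
  have hmem : ∀ i < L,
      g i ∈ (SA N ×ˢ SB N).filter (fun p => p.1 + 1 = p.2 ∨ p.2 + 1 = p.1) := by
    intro i hi
    by_cases h : Even i
    · have hgi : g i = (i, i + 1) := by simp [hg, h]
      obtain ⟨r, hr⟩ := h
      rw [hgi]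
      simp only [Finset.mem_filter, Finset.mem_product]
      refine ⟨⟨mem_SA.mpr ⟨r, by omega, by omega⟩, mem_SB.mpr ⟨r, by omega, by omega⟩⟩, ?_⟩
      left; trivial
    · have h' : i % 2 = 1 := Nat.not_even_iff.mp h
      have hgi : g i = (i + 1, i) := by simp [hg, h]
      rw [hgi]
      simp only [Finset.mem_filter, Finset.mem_product]
      refine ⟨⟨mem_SA.mpr ⟨i / 2 + 1, by omega, by omega⟩,
        mem_SB.mpr ⟨i / 2, by omega, by omega⟩⟩, ?_⟩
      right; trivial
  -- edge bound along the chain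
  have hedge : ∀ i < L, |c (i + 1) - c i| ≤ Pdiff P (g i).1 (g i).2 := by
    intro i hi
    have hgm := hmem i hi
    simp only [Finset.mem_filter, Finset.mem_product] at hgm
    by_cases h : Even i
    · have hio : ¬ Even (i + 1) := by simp [Nat.even_add_one, h]
      have hgi : g i = (i, i + 1) := by simp [hg, h]
      rw [hgi] at hgm ⊢
      obtain ⟨⟨hA, hB⟩, -⟩ := hgm
      have e1 : c i = PX P i (i + 1) 1 := by
        rw [hc]; simp only [if_pos h]
        exact hNSX i hA 1 h1SB (i + 1) hB 1 hpmone
      have e2 : c (i + 1) = PY P i (i + 1) 1 := by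
        rw [hc]; simp only [if_neg hio]
        exact hNSY 0 h0SA i hA (i + 1) hB 1 hpmone
      rw [e1, e2, abs_sub_comm]
      exact hdiff i hA (i + 1) hB
    · have hio : Even (i + 1) := Nat.even_add_one.mpr h
      have hgi : g i = (i + 1, i) := by simp [hg, h]
      rw [hgi] at hgm ⊢
      obtain ⟨⟨hA, hB⟩, -⟩ := hgm
      have e1 : c i = PY P (i + 1) i 1 := by
        rw [hc]; simp only [if_neg h]
        exact hNSY 0 h0SA (i + 1) hA i hB 1 hpmone
      have e2 : c (i + 1) = PX P (i + 1) i 1 := by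
        rw [hc]; simp only [if_pos hio]
        exact hNSX (i + 1) hA 1 h1SB i hB 1 hpmone
      rw [e1, e2]
      exact hdiff (i + 1) hA i hB
  -- closing (agreement) bound
  have hagree : |c 0 + c L - 1| ≤ Pagree P 0 L := by
    have hLodd : ¬ Even L := by rw [Nat.not_even_iff]; omega
    have hc0 : c 0 = PX P 0 L 1 := by
      rw [hc]; simp only [Even.zero, if_pos]
      exact hNSX 0 h0SA 1 h1SB L hLSB 1 hpmone
    have hcL : c L = PY P 0 L 1 := by rw [hc]; simp [hLodd]
    rw [hc0, hcL]
    have hs := hsum 0 h0SA L hLSB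
    have h1 := hpos 0 h0SA L hLSB 1 (by decide) 1 (by decide)
    have h2 := hpos 0 h0SA L hLSB (-1) (by decide) (-1) (by decide)
    simp only [PX, PY, Pagree, sum_pm] at hs ⊢
    rw [abs_le]
    constructor <;> linarith
  -- compare the chain sum with the Bell sum
  have hinj : ∀ i ∈ Finset.range L, ∀ j ∈ Finset.range L, g i = g j → i = j := by
    intro i _ j _ hij
    have key : ∀ n, min (g n).1 (g n).2 = n := by
      intro n
      by_cases h : Even n <;> simp [hg, h]
    rw [← key i, ← key j, hij]
  have hsum_img : ∑ i ∈ Finset.range L, Pdiff P (g i).1 (g i).2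
      ≤ ∑ p ∈ (SA N ×ˢ SB N).filter (fun p => p.1 + 1 = p.2 ∨ p.2 + 1 = p.1),
          Pdiff P p.1 p.2 := by
    have himg : ∑ p ∈ (Finset.range L).image g, Pdiff P p.1 p.2
        = ∑ i ∈ Finset.range L, Pdiff P (g i).1 (g i).2 := Finset.sum_image hinj
    rw [← himg]
    apply Finset.sum_le_sum_of_subset_of_nonneg
    · intro p hp
      obtain ⟨i, hi, rfl⟩ := Finset.mem_image.mp hp
      exact hmem i (Finset.mem_range.mp hi)
    · intro p hp _
      simp only [Finset.mem_filter, Finset.mem_product] at hp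
      have h1 := hpos p.1 hp.1.1 p.2 hp.1.2 1 (by decide) (-1) (by decide)
      have h2 := hpos p.1 hp.1.1 p.2 hp.1.2 (-1) (by decide) 1 (by decide)
      rw [Pdiff]; linarith
  -- telescoping
  have haL : a ≤ L := by omega
  have hT1 : |c a - c 0| ≤ ∑ i ∈ Finset.Ico 0 a, |c (i + 1) - c i| :=
    telescope c 0 a (Nat.zero_le a)
  have hT2 : |c L - c a| ≤ ∑ i ∈ Finset.Ico a L, |c (i + 1) - c i| :=
    telescope c a L haL
  have hsplit : ∑ i ∈ Finset.Ico 0 a, |c (i + 1) - c i|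
      + ∑ i ∈ Finset.Ico a L, |c (i + 1) - c i|
      = ∑ i ∈ Finset.range L, |c (i + 1) - c i| := by
    rw [Finset.sum_Ico_consecutive _ (Nat.zero_le a) haL, Finset.range_eq_Ico]
  have habs_le_E : ∑ i ∈ Finset.range L, |c (i + 1) - c i|
      ≤ ∑ i ∈ Finset.range L, Pdiff P (g i).1 (g i).2 :=
    Finset.sum_le_sum fun i hi => hedge i (Finset.mem_range.mp hi)
  -- key inequality
  have hkey : |2 * c a - 1| ≤ IN P N := by
    have e : 2 * c a - 1 = ((c a - c 0) + (c a - c L)) + (c 0 + c L - 1) := by ring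
    have htri : |2 * c a - 1| ≤ |c a - c 0| + |c L - c a| + |c 0 + c L - 1| := by
      rw [e]
      refine le_trans (abs_add_le _ _) ?_
      have h1 := abs_add_le (c a - c 0) (c a - c L)
      have h2 : |c a - c L| = |c L - c a| := abs_sub_comm _ _
      linarith
    rw [IN, ← hL]
    linarith
  -- finish
  have hxa : c a = PX P a b 1 := by
    have hae : Even a := ⟨k, by omega⟩
    rw [hc]; simp only [if_pos hae]
    exact hNSX a ha 1 h1SB b hb 1 hpmone
  have hsum1 : PX P a b 1 + PX P a b (-1) = 1 := by
    have hs := hsum a ha b hb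
    rw [sum_pm (fun x => ∑ y ∈ pm, P a b x y)] at hs
    simpa [PX] using hs
  have hneg : |PX P a b (-1) - 1 / 2| = |PX P a b 1 - 1 / 2| := by
    rw [show PX P a b (-1) - 1 / 2 = -(PX P a b 1 - 1 / 2) by linarith, abs_neg]
  have h2x : |2 * PX P a b 1 - 1| = 2 * |PX P a b 1 - 1 / 2| := by
    rw [show 2 * PX P a b 1 - 1 = 2 * (PX P a b 1 - 1 / 2) by ring, abs_mul]
    norm_num
  rw [hxa] at hkey
  rw [hneg]
  linarith
end
end

section
/- Let N ≥ 1 and suppose the family of distributions P_{XY|AB} on pairs (x,y) ∈ {+1,−1}², indexed by settings a ∈ {0,2,…,2N−2} and b ∈ {1,3,…,2N−1}, is a local hidden variable model: there exist a finite set Λ, a probability distribution q on Λ, and families of probability distributions P₁(·|a,λ) and P₂(·|b,λ) on {+1,−1} such that P(x,y|a,b) = Σ_{λ∈Λ} q(λ)·P₁(x|a,λ)·P₂(y|b,λ) for all x, y, a, b. Then the chained-Bell quantity satisfies I_N ≥ 1. -/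
noncomputable section

open Finset

/-- Disagreement probability for two independent ±1 variables with `P(+1)=u`, `P(+1)=v`. -/
def cbD (u v : ℝ) : ℝ := u * (1 - v) + (1 - u) * v

lemma cbD_symm (u v : ℝ) : cbD u v = cbD v u := by unfold cbD; ring

lemma cbD_tri {u v w : ℝ} (hu0 : 0 ≤ u) (hu1 : u ≤ 1) (hv0 : 0 ≤ v) (hv1 : v ≤ 1)
    (hw0 : 0 ≤ w) (hw1 : w ≤ 1) : cbD u w ≤ cbD u v + cbD v w := by
  unfold cbD
  nlinarith [mul_nonneg (mul_nonneg (sub_nonneg.2 hv1) hu0) hw0,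
    mul_nonneg (mul_nonneg hv0 (sub_nonneg.2 hu1)) (sub_nonneg.2 hw1)]

lemma cbD_chain (h : ℕ → ℝ) (n : ℕ) (hb : ∀ m, m ≤ n + 1 → 0 ≤ h m ∧ h m ≤ 1) :
    cbD (h 0) (h (n + 1)) ≤ ∑ m ∈ Finset.range (n + 1), cbD (h m) (h (m + 1)) := by
  induction n with
  | zero => simp
  | succ n ih =>
    rw [Finset.sum_range_succ]
    have h0 := hb 0 (by omega)
    have h1 := hb (n + 1) (by omega)
    have h2 := hb (n + 2) (by omega)
    have htri := cbD_tri h0.1 h0.2 h1.1 h1.2 h2.1 h2.2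
    have := ih (fun m hm => hb m (by omega))
    linarith

/-- `I_N ≥ 1` is a Bell inequality: it holds for any local hidden
variable model, i.e. any family of the form
`P(x,y|a,b) = ∑_λ q(λ) · P₁(x|a,λ) · P₂(y|b,λ)`. -/
theorem statement7 (N : ℕ) (hN : 1 ≤ N)
    (P : ℕ → ℕ → ℤ → ℤ → ℝ)
    (Λ : Type) [Fintype Λ]
    (q : Λ → ℝ) (hq : ∀ l : Λ, 0 ≤ q l) (hq1 : ∑ l, q l = 1)
    (P₁ : ℤ → ℕ → Λ → ℝ)
    (hP₁pos : ∀ x ∈ pm, ∀ a ∈ SA N, ∀ l : Λ, 0 ≤ P₁ x a l)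
    (hP₁sum : ∀ a ∈ SA N, ∀ l : Λ, ∑ x ∈ pm, P₁ x a l = 1)
    (P₂ : ℤ → ℕ → Λ → ℝ)
    (hP₂pos : ∀ y ∈ pm, ∀ b ∈ SB N, ∀ l : Λ, 0 ≤ P₂ y b l)
    (hP₂sum : ∀ b ∈ SB N, ∀ l : Λ, ∑ y ∈ pm, P₂ y b l = 1)
    (hfac : ∀ a ∈ SA N, ∀ b ∈ SB N, ∀ x ∈ pm, ∀ y ∈ pm,
      P a b x y = ∑ l, q l * P₁ x a l * P₂ y b l) :
    1 ≤ IN P N := by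
  classical
  have hpm1 : (1:ℤ) ∈ pm := by simp [pm]
  have hpm2 : (-1:ℤ) ∈ pm := by simp [pm]
  have hne : (1:ℤ) ≠ -1 := by norm_num
  -- complements
  have hP₁c : ∀ a ∈ SA N, ∀ l, P₁ (-1) a l = 1 - P₁ 1 a l := by
    intro a ha l
    have := hP₁sum a ha l
    rw [pm, Finset.sum_pair hne] at this
    linarith
  have hP₂c : ∀ b ∈ SB N, ∀ l, P₂ (-1) b l = 1 - P₂ 1 b l := by
    intro b hb l
    have := hP₂sum b hb l
    rw [pm, Finset.sum_pair hne] at this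
    linarith
  have hubd : ∀ a ∈ SA N, ∀ l, 0 ≤ P₁ 1 a l ∧ P₁ 1 a l ≤ 1 := by
    intro a ha l
    have h1 := hP₁pos 1 hpm1 a ha l
    have h2 := hP₁pos (-1) hpm2 a ha l
    have h3 := hP₁c a ha l
    constructor <;> linarith
  have hvbd : ∀ b ∈ SB N, ∀ l, 0 ≤ P₂ 1 b l ∧ P₂ 1 b l ≤ 1 := by
    intro b hb l
    have h1 := hP₂pos 1 hpm1 b hb l
    have h2 := hP₂pos (-1) hpm2 b hb l
    have h3 := hP₂c b hb l
    constructor <;> linarith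
  have hSA : ∀ m : ℕ, m % 2 = 0 → m < 2 * N → m ∈ SA N := by
    intro m hm hlt
    simp only [SA, mem_image, mem_range]
    exact ⟨m / 2, by omega, by omega⟩
  have hSB : ∀ m : ℕ, m % 2 = 1 → m < 2 * N → m ∈ SB N := by
    intro m hm hlt
    simp only [SB, mem_image, mem_range]
    exact ⟨m / 2, by omega, by omega⟩
  -- the chain function
  set h : Λ → ℕ → ℝ := fun l m => if m % 2 = 0 then P₁ 1 m l else P₂ 1 m l with hh
  have hbd : ∀ l, ∀ m, m < 2 * N → 0 ≤ h l m ∧ h l m ≤ 1 := by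
    intro l m hm
    by_cases hp : m % 2 = 0
    · simpa [hh, hp] using hubd m (hSA m hp hm) l
    · have hp1 : m % 2 = 1 := by omega
      simpa [hh, hp] using hvbd m (hSB m hp1 hm) l
  -- Pdiff in LHV form
  have hPdiff : ∀ a ∈ SA N, ∀ b ∈ SB N,
      Pdiff P a b = ∑ l, q l * cbD (P₁ 1 a l) (P₂ 1 b l) := by
    intro a ha b hb
    unfold Pdiff
    rw [hfac a ha b hb 1 hpm1 (-1) hpm2, hfac a ha b hb (-1) hpm2 1 hpm1,
      ← Finset.sum_add_distrib]
    refine Finset.sum_congr rfl fun l _ => ?_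
    rw [hP₁c a ha l, hP₂c b hb l]
    unfold cbD; ring
  have h0A : (0 : ℕ) ∈ SA N := hSA 0 rfl (by omega)
  have h2NB : (2 * N - 1) ∈ SB N := hSB (2 * N - 1) (by omega) (by omega)
  have hPagree : Pagree P 0 (2 * N - 1)
      = ∑ l, q l * (1 - cbD (P₁ 1 0 l) (P₂ 1 (2 * N - 1) l)) := by
    unfold Pagree
    rw [hfac 0 h0A (2 * N - 1) h2NB 1 hpm1 1 hpm1,
      hfac 0 h0A (2 * N - 1) h2NB (-1) hpm2 (-1) hpm2, ← Finset.sum_add_distrib]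
    refine Finset.sum_congr rfl fun l _ => ?_
    rw [hP₁c 0 h0A l, hP₂c (2 * N - 1) h2NB l]
    unfold cbD; ring
  -- index set rewrite
  have hset : (SA N ×ˢ SB N).filter (fun p => p.1 + 1 = p.2 ∨ p.2 + 1 = p.1)
      = (range (2 * N - 1)).image (fun m => if m % 2 = 0 then (m, m + 1) else (m + 1, m)) := by
    ext ⟨a, b⟩
    simp only [mem_filter, mem_product, SA, SB, mem_image, mem_range, Prod.mk.injEq]
    constructor
    · rintro ⟨⟨⟨i, hi, rfl⟩, ⟨j, hj, rfl⟩⟩, hab | hab⟩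
      · refine ⟨2 * i, by omega, ?_⟩
        rw [if_pos (by omega), Prod.mk.injEq]
        exact ⟨rfl, by omega⟩
      · refine ⟨2 * j + 1, by omega, ?_⟩
        rw [if_neg (by omega), Prod.mk.injEq]
        exact ⟨by omega, rfl⟩
    · rintro ⟨m, hm, hφ⟩
      split at hφ
      · obtain ⟨rfl, rfl⟩ := Prod.mk.inj hφ
        exact ⟨⟨⟨m / 2, by omega, by omega⟩, ⟨m / 2, by omega, by omega⟩⟩, Or.inl rfl⟩
      · obtain ⟨rfl, rfl⟩ := Prod.mk.inj hφ
        exact ⟨⟨⟨(m + 1) / 2, by omega, by omega⟩, ⟨m / 2, by omega, by omega⟩⟩, Or.inr rfl⟩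
  have hinj : ∀ m ∈ range (2 * N - 1), ∀ m' ∈ range (2 * N - 1),
      (if m % 2 = 0 then (m, m + 1) else (m + 1, m))
        = (if m' % 2 = 0 then (m', m' + 1) else (m' + 1, m')) → m = m' := by
    intro m _ m' _ hE
    split at hE <;> split at hE <;> (rw [Prod.mk.injEq] at hE; omega)
  have hterm : ∀ m ∈ range (2 * N - 1),
      Pdiff P (if m % 2 = 0 then (m, m + 1) else (m + 1, m)).1
        (if m % 2 = 0 then (m, m + 1) else (m + 1, m)).2
        = ∑ l, q l * cbD (h l m) (h l (m + 1)) := by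
    intro m hm
    rw [mem_range] at hm
    by_cases hp : m % 2 = 0
    · have hp1 : (m + 1) % 2 ≠ 0 := by omega
      rw [if_pos hp]
      rw [hPdiff m (hSA m hp (by omega)) (m + 1) (hSB (m + 1) (by omega) (by omega))]
      refine Finset.sum_congr rfl fun l _ => ?_
      simp only [hh, if_pos hp, if_neg hp1]
    · have hp1 : m % 2 = 1 := by omega
      have hp2 : (m + 1) % 2 = 0 := by omega
      rw [if_neg hp]
      rw [hPdiff (m + 1) (hSA (m + 1) hp2 (by omega)) m (hSB m hp1 (by omega))]
      refine Finset.sum_congr rfl fun l _ => ?_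
      simp only [hh, if_pos hp2, if_neg hp]
      rw [cbD_symm]
  rw [IN, hset, Finset.sum_image hinj, Finset.sum_congr rfl hterm, hPagree,
    Finset.sum_comm, ← Finset.sum_add_distrib]
  calc (1:ℝ) = ∑ l, q l := hq1.symm
    _ ≤ _ := by
      refine Finset.sum_le_sum fun l _ => ?_
      obtain ⟨n, hn⟩ : ∃ n, 2 * N - 1 = n + 1 := ⟨2 * N - 2, by omega⟩
      have hchain : cbD (h l 0) (h l (2 * N - 1))
          ≤ ∑ m ∈ range (2 * N - 1), cbD (h l m) (h l (m + 1)) := by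
        rw [hn]
        exact cbD_chain (h l) n (fun m hm => hbd l m (by omega))
      have hd0 : h l 0 = P₁ 1 0 l := by simp [hh]
      have hd1 : h l (2 * N - 1) = P₂ 1 (2 * N - 1) l := by
        have : (2 * N - 1) % 2 ≠ 0 := by omega
        simp [hh, this]
      rw [hd0, hd1] at hchain
      have hql := hq l
      rw [← Finset.mul_sum]
      nlinarith [mul_nonneg hql (sub_nonneg.2 hchain)]
end
end
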